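/- A permutation π of {1,…,n} is a simple permutation if and only if its inversion graph G_π is a prime graph. -/

import Mathlib

/-- The inversion graph of a permutation of `{0, …, n-1}`: `i` and `j` with `i < j`
are adjacent iff `π j < π i`. -/
def invGraph {n : ℕ} (π : Equiv.Perm (Fin n)) : SimpleGraph (Fin n) :=
  SimpleGraph.fromRel fun i j => i < j ∧ π j < π i

/-- An interval of a permutation: a set of consecutive indices whose image is also a set
of consecutive values. -/
def IsPermInterval {n : ℕ} (π : Equiv.Perm (Fin n)) (I : Set (Fin n)) : Prop :=
  (∀ ⦃a b c : Fin n⦄, a ∈ I → c ∈ I → a ≤ b → b ≤ c → b ∈ I) ∧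
  (∀ ⦃a b c : Fin n⦄, a ∈ (⇑π) '' I → c ∈ (⇑π) '' I → a ≤ b → b ≤ c → b ∈ (⇑π) '' I)

/-- A permutation is simple if all of its intervals are trivial. -/
def IsSimplePerm {n : ℕ} (π : Equiv.Perm (Fin n)) : Prop :=
  ∀ I : Set (Fin n), IsPermInterval π I → I.ncard ≤ 1 ∨ I = Set.univ

/-- A module (homogeneous set) of a simple graph. -/
def SimpleGraph.IsModuleSet {V : Type*} (G : SimpleGraph V) (M : Set V) : Prop :=
  ∀ v ∉ M, (∀ u ∈ M, G.Adj v u) ∨ (∀ u ∈ M, ¬ G.Adj v u)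

/-- A graph is prime if all of its modules are trivial. -/
def SimpleGraph.IsPrimeGraph {V : Type*} (G : SimpleGraph V) : Prop :=
  ∀ M : Set V, G.IsModuleSet M → M.ncard ≤ 1 ∨ M = Set.univ

section helpers
variable {n : ℕ} (π : Equiv.Perm (Fin n))

lemma adj_iff {v u : Fin n} :
    (invGraph π).Adj v u ↔ v ≠ u ∧ ((v < u ∧ π u < π v) ∨ (u < v ∧ π v < π u)) := by
  simp [invGraph, SimpleGraph.fromRel_adj]

lemma flipP {a b : Fin n} (h : a < b ↔ π a < π b) (hlt : b < a) : π b < π a := by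
  have h1 : ¬ π a < π b := fun hx => lt_asymm hlt (h.mpr hx)
  exact lt_of_le_of_ne (le_of_not_gt h1) (fun he => hlt.ne (π.injective he))

lemma flipQ {a b : Fin n} (h : a < b ↔ π b < π a) (hlt : b < a) : π a < π b := by
  have h1 : ¬ π b < π a := fun hx => lt_asymm hlt (h.mpr hx)
  exact lt_of_le_of_ne (le_of_not_gt h1) (fun he => hlt.ne' (π.injective he))

lemma flipP' {a b : Fin n} (h : a < b ↔ π a < π b) (hlt : π b < π a) : b < a := by
  have h1 : ¬ a < b := fun hx => lt_asymm hlt (h.mp hx)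
  exact lt_of_le_of_ne (le_of_not_gt h1) (fun he => hlt.ne (by rw [he]))

lemma flipQ' {a b : Fin n} (h : a < b ↔ π b < π a) (hlt : π a < π b) : b < a := by
  have h1 : ¬ a < b := fun hx => lt_asymm hlt (h.mp hx)
  exact lt_of_le_of_ne (le_of_not_gt h1) (fun he => hlt.ne' (by rw [he]))

lemma not_adj_of {v u : Fin n} (h1 : v < u) (h2 : π v < π u) : ¬ (invGraph π).Adj v u := by
  rw [adj_iff]
  rintro ⟨-, ⟨-, h⟩ | ⟨h, -⟩⟩
  exacts [lt_asymm h2 h, lt_asymm h1 h]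

lemma not_adj_of' {v u : Fin n} (h1 : u < v) (h2 : π u < π v) : ¬ (invGraph π).Adj v u := by
  rw [adj_iff]
  rintro ⟨-, ⟨h, -⟩ | ⟨-, h⟩⟩
  exacts [lt_asymm h1 h, lt_asymm h2 h]

lemma adj_of {v u : Fin n} (h1 : v < u) (h2 : π u < π v) : (invGraph π).Adj v u :=
  (adj_iff π).2 ⟨h1.ne, Or.inl ⟨h1, h2⟩⟩

lemma adj_of' {v u : Fin n} (h1 : u < v) (h2 : π v < π u) : (invGraph π).Adj v u :=
  (adj_iff π).2 ⟨h1.ne', Or.inr ⟨h1, h2⟩⟩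

lemma not_adj_of_noninv {v u : Fin n} (hne : v ≠ u) (h : v < u ↔ π v < π u) :
    ¬ (invGraph π).Adj v u := by
  rcases hne.lt_or_gt with h1 | h1
  · exact not_adj_of π h1 (h.1 h1)
  · exact not_adj_of' π h1 (flipP π h h1)

lemma adj_of_inv {v u : Fin n} (hne : v ≠ u) (h : v < u ↔ π u < π v) :
    (invGraph π).Adj v u := by
  rcases hne.lt_or_gt with h1 | h1
  · exact adj_of π h1 (h.1 h1)
  · exact adj_of' π h1 (flipQ π h h1)

lemma type_dichotomy {M : Set (Fin n)} (hM : (invGraph π).IsModuleSet M)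
    {v : Fin n} (hv : v ∉ M) :
    (∀ u ∈ M, (v < u ↔ π v < π u)) ∨ (∀ u ∈ M, (v < u ↔ π u < π v)) := by
  have hne : ∀ u ∈ M, v ≠ u := fun u hu he => hv (he ▸ hu)
  rcases hM v hv with h | h
  · right
    intro u hu
    rcases (adj_iff π).1 (h u hu) with ⟨-, ⟨h1, h2⟩ | ⟨h1, h2⟩⟩
    · exact ⟨fun _ => h2, fun _ => h1⟩
    · exact ⟨fun hx => absurd hx (lt_asymm h1), fun hx => absurd hx (lt_asymm h2)⟩
  · left
    intro u hu
    have hna := h u hu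
    rw [adj_iff] at hna
    push_neg at hna
    have hd := hna (hne u hu)
    constructor
    · intro hlt
      exact lt_of_le_of_ne (hd.1 hlt) (fun he => (hne u hu) (π.injective he))
    · intro hval
      rcases (hne u hu).lt_or_gt with h1 | h1
      · exact h1
      · exact absurd hval (not_lt.2 (hd.2 h1))


lemma gap_module {M : Set (Fin n)} (hM : (invGraph π).IsModuleSet M)
    {m1 m2 : Fin n} (hm1 : m1 ∈ M) (hm2 : m2 ∈ M) :
    (invGraph π).IsModuleSet (M ∪ (Mᶜ ∩ {i | m1 < i ∧ i < m2})) := by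
  intro v hv
  have hvM : v ∉ M := fun h => hv (Or.inl h)
  have hside : v < m1 ∨ m2 < v := by
    have hvG : ¬ (m1 < v ∧ v < m2) := fun h => hv (Or.inr ⟨hvM, h⟩)
    rcases not_and_or.mp hvG with h | h
    · exact Or.inl (lt_of_le_of_ne (le_of_not_gt h) (fun he => hvM (by rw [he]; exact hm1)))
    · exact Or.inr (lt_of_le_of_ne (le_of_not_gt h) (fun he => hvM (by rw [← he]; exact hm2)))
  rcases type_dichotomy π hM hvM with hP | hQ
  · right
    rintro u (huM | ⟨huM, hu1, hu2⟩)
    · exact not_adj_of_noninv π (fun he => hvM (by rw [he]; exact huM)) (hP u huM)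
    · have hm12 : m1 < m2 := lt_trans hu1 hu2
      rcases hside with h | h
      · have hvu : v < u := lt_trans h hu1
        have hval : π v < π u := by
          rcases type_dichotomy π hM huM with hPg | hQg
          · exact lt_trans ((hP m1 hm1).1 h) (flipP π (hPg m1 hm1) hu1)
          · exact lt_trans ((hP m2 hm2).1 (lt_trans h hm12)) ((hQg m2 hm2).1 hu2)
        exact not_adj_of π hvu hval
      · have huv : u < v := lt_trans hu2 h
        have hval : π u < π v := by
          rcases type_dichotomy π hM huM with hPg | hQg
          · exact lt_trans ((hPg m2 hm2).1 hu2) (flipP π (hP m2 hm2) h)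
          · exact lt_trans (flipQ π (hQg m1 hm1) hu1) (flipP π (hP m1 hm1) (lt_trans hm12 h))
        exact not_adj_of' π huv hval
  · left
    rintro u (huM | ⟨huM, hu1, hu2⟩)
    · exact adj_of_inv π (fun he => hvM (by rw [he]; exact huM)) (hQ u huM)
    · have hm12 : m1 < m2 := lt_trans hu1 hu2
      rcases hside with h | h
      · have hvu : v < u := lt_trans h hu1
        have hval : π u < π v := by
          rcases type_dichotomy π hM huM with hPg | hQg
          · exact lt_trans ((hPg m2 hm2).1 hu2) ((hQ m2 hm2).1 (lt_trans h hm12))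
          · exact lt_trans (flipQ π (hQg m1 hm1) hu1) ((hQ m1 hm1).1 h)
        exact adj_of π hvu hval
      · have huv : u < v := lt_trans hu2 h
        have hval : π v < π u := by
          rcases type_dichotomy π hM huM with hPg | hQg
          · exact lt_trans (flipQ π (hQ m1 hm1) (lt_trans hm12 h)) (flipP π (hPg m1 hm1) hu1)
          · exact lt_trans (flipQ π (hQ m2 hm2) h) ((hQg m2 hm2).1 hu2)
        exact adj_of' π huv hval

lemma gap_module' {M : Set (Fin n)} (hM : (invGraph π).IsModuleSet M)
    {m1 m2 : Fin n} (hm1 : m1 ∈ M) (hm2 : m2 ∈ M) :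
    (invGraph π).IsModuleSet (M ∪ (Mᶜ ∩ {i | π m1 < π i ∧ π i < π m2})) := by
  intro v hv
  have hvM : v ∉ M := fun h => hv (Or.inl h)
  have hside : π v < π m1 ∨ π m2 < π v := by
    have hvG : ¬ (π m1 < π v ∧ π v < π m2) := fun h => hv (Or.inr ⟨hvM, h⟩)
    rcases not_and_or.mp hvG with h | h
    · exact Or.inl (lt_of_le_of_ne (le_of_not_gt h)
        (fun he => hvM (by rw [π.injective he]; exact hm1)))
    · exact Or.inr (lt_of_le_of_ne (le_of_not_gt h)
        (fun he => hvM (by rw [← π.injective he]; exact hm2)))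
  rcases type_dichotomy π hM hvM with hP | hQ
  · right
    rintro u (huM | ⟨huM, hu1, hu2⟩)
    · exact not_adj_of_noninv π (fun he => hvM (by rw [he]; exact huM)) (hP u huM)
    · have hm12 : π m1 < π m2 := lt_trans hu1 hu2
      rcases hside with h | h
      · have hval : π v < π u := lt_trans h hu1
        have hidx : v < u := by
          rcases type_dichotomy π hM huM with hPg | hQg
          · exact lt_trans ((hP m1 hm1).2 h) (flipP' π (hPg m1 hm1) hu1)
          · exact lt_trans ((hP m2 hm2).2 (lt_trans h hm12)) (flipQ' π (hQg m2 hm2) hu2)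
        exact not_adj_of π hidx hval
      · have hval : π u < π v := lt_trans hu2 h
        have hidx : u < v := by
          rcases type_dichotomy π hM huM with hPg | hQg
          · exact lt_trans ((hPg m2 hm2).2 hu2) (flipP' π (hP m2 hm2) h)
          · exact lt_trans ((hQg m1 hm1).2 hu1) (flipP' π (hP m1 hm1) (lt_trans hm12 h))
        exact not_adj_of' π hidx hval
  · left
    rintro u (huM | ⟨huM, hu1, hu2⟩)
    · exact adj_of_inv π (fun he => hvM (by rw [he]; exact huM)) (hQ u huM)
    · have hm12 : π m1 < π m2 := lt_trans hu1 hu2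
      rcases hside with h | h
      · have hval : π v < π u := lt_trans h hu1
        have hidx : u < v := by
          rcases type_dichotomy π hM huM with hPg | hQg
          · exact lt_trans ((hPg m2 hm2).2 hu2) (flipQ' π (hQ m2 hm2) (lt_trans h hm12))
          · exact lt_trans ((hQg m1 hm1).2 hu1) (flipQ' π (hQ m1 hm1) h)
        exact adj_of' π hidx hval
      · have hval : π u < π v := lt_trans hu2 h
        have hidx : v < u := by
          rcases type_dichotomy π hM huM with hPg | hQg
          · exact lt_trans ((hQ m1 hm1).2 (lt_trans hm12 h)) (flipP' π (hPg m1 hm1) hu1)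
          · exact lt_trans ((hQ m2 hm2).2 h) (flipQ' π (hQg m2 hm2) hu2)
        exact adj_of π hidx hval

lemma interval_module {I : Set (Fin n)} (hI : IsPermInterval π I) :
    (invGraph π).IsModuleSet I := by
  obtain ⟨hidx, hval⟩ := hI
  intro v hv
  have hside : (∀ u ∈ I, v < u) ∨ (∀ u ∈ I, u < v) := by
    by_contra hc
    push_neg at hc
    obtain ⟨⟨u1, hu1, hnu1⟩, ⟨u2, hu2, hnu2⟩⟩ := hc
    exact hv (hidx hu1 hu2 hnu1 hnu2)
  have hvside : (∀ u ∈ I, π v < π u) ∨ (∀ u ∈ I, π u < π v) := by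
    by_contra hc
    push_neg at hc
    obtain ⟨⟨u1, hu1, hnu1⟩, ⟨u2, hu2, hnu2⟩⟩ := hc
    obtain ⟨u, huI, hu⟩ :=
      hval (Set.mem_image_of_mem _ hu1) (Set.mem_image_of_mem _ hu2) hnu1 hnu2
    exact hv (π.injective hu ▸ huI)
  rcases hside with h1 | h1 <;> rcases hvside with h2 | h2
  · exact Or.inr (fun u hu => not_adj_of π (h1 u hu) (h2 u hu))
  · exact Or.inl (fun u hu => adj_of π (h1 u hu) (h2 u hu))
  · exact Or.inl (fun u hu => adj_of' π (h1 u hu) (h2 u hu))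
  · exact Or.inr (fun u hu => not_adj_of' π (h1 u hu) (h2 u hu))

end helpers

theorem simplePerm_iff_invGraph_prime {n : ℕ} (π : Equiv.Perm (Fin n)) :
    IsSimplePerm π ↔ (invGraph π).IsPrimeGraph := by
  constructor
  · intro hsimple M hmod
    by_contra hc
    push_neg at hc
    obtain ⟨hc1, hc2⟩ := hc
    obtain ⟨x0, hx0⟩ : M.Nonempty := Set.nonempty_of_ncard_ne_zero (by omega)
    have hn0 : n ≠ 0 := by rintro rfl; exact x0.elim0
    obtain ⟨k, rfl⟩ : ∃ k, n = k + 1 := ⟨n - 1, by omega⟩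
    -- maximal bad module
    set S : Set (Set (Fin (k+1))) :=
      {A | (invGraph π).IsModuleSet A ∧ 2 ≤ A.ncard ∧ A ≠ Set.univ} with hSdef
    have hSne : S.Nonempty := ⟨M, hmod, by omega, hc2⟩
    obtain ⟨M₀, hM₀S, hmax⟩ :=
      Set.Finite.exists_maximalFor Set.ncard S (Set.toFinite S) hSne
    obtain ⟨hmod₀, hcard₀, hne₀⟩ := hM₀S
    have hmaxEq : ∀ M', (invGraph π).IsModuleSet M' → M₀ ⊆ M' → M' ≠ Set.univ → M₀ = M' := by
      intro M' h1 h2 h3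
      have hcard : M₀.ncard ≤ M'.ncard := Set.ncard_le_ncard h2 (Set.toFinite _)
      have he := hmax (j := M') ⟨h1, le_trans hcard₀ hcard, h3⟩ hcard
      exact Set.eq_of_subset_of_ncard_le h2 he (Set.toFinite _)
    set H : Set (Fin (k+1)) := {i | (∃ a ∈ M₀, a ≤ i) ∧ ∃ b ∈ M₀, i ≤ b} with hHdef
    have hMH : M₀ ⊆ H := fun i hi => ⟨⟨i, hi, le_refl i⟩, ⟨i, hi, le_refl i⟩⟩
    by_cases hH : H = Set.univ
    · -- H = univ : 0, last ∈ M₀ etc.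
      have hx0M : (0 : Fin (k+1)) ∈ M₀ := by
        have h0 : (0 : Fin (k+1)) ∈ H := by rw [hH]; exact Set.mem_univ _
        obtain ⟨⟨a, haM, ha0⟩, -⟩ := h0
        rwa [le_antisymm ha0 (Fin.zero_le a)] at haM
      have hlast : Fin.last k ∈ M₀ := by
        have h0 : Fin.last k ∈ H := by rw [hH]; exact Set.mem_univ _
        obtain ⟨-, ⟨b, hbM, hb⟩⟩ := h0
        rwa [le_antisymm (Fin.le_last b) hb] at hbM
      have hv0 : π.symm 0 ∈ M₀ := by
        by_contra hi
        rcases type_dichotomy π hmod₀ hi with hP | hQ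
        · have hpos : (0 : Fin (k+1)) < π.symm 0 :=
            lt_of_le_of_ne (Fin.zero_le _) (fun he => hi (by rw [← he]; exact hx0M))
          have := flipP π (hP 0 hx0M) hpos
          rw [π.apply_symm_apply] at this
          exact absurd this (Fin.not_lt_zero _)
        · have hlt : π.symm 0 < Fin.last k :=
            lt_of_le_of_ne (Fin.le_last _) (fun he => hi (by rw [he]; exact hlast))
          have := (hQ (Fin.last k) hlast).1 hlt
          rw [π.apply_symm_apply] at this
          exact absurd this (Fin.not_lt_zero _)
      have hvl : π.symm (Fin.last k) ∈ M₀ := by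
        by_contra hi
        rcases type_dichotomy π hmod₀ hi with hP | hQ
        · have hlt : π.symm (Fin.last k) < Fin.last k :=
            lt_of_le_of_ne (Fin.le_last _) (fun he => hi (by rw [he]; exact hlast))
          have := (hP (Fin.last k) hlast).1 hlt
          rw [π.apply_symm_apply] at this
          exact absurd this (not_lt.2 (Fin.le_last _))
        · have hpos : (0 : Fin (k+1)) < π.symm (Fin.last k) :=
            lt_of_le_of_ne (Fin.zero_le _) (fun he => hi (by rw [← he]; exact hx0M))
          have := flipQ π (hQ 0 hx0M) hpos
          rw [π.apply_symm_apply] at this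
          exact absurd this (not_lt.2 (Fin.le_last _))
      have hCconv : ∀ ⦃c1 b c2 : Fin (k+1)⦄,
          c1 ∉ M₀ → c2 ∉ M₀ → c1 ≤ b → b ≤ c2 → b ∉ M₀ := by
        intro c1 b c2 h1 h2 h12 h23 hbM
        have hmod' := gap_module π hmod₀ hx0M hbM
        have hne' : M₀ ∪ (M₀ᶜ ∩ {i | 0 < i ∧ i < b}) ≠ Set.univ := by
          intro hu
          have hc2' : c2 ∈ M₀ ∪ (M₀ᶜ ∩ {i | 0 < i ∧ i < b}) := by
            rw [hu]; exact Set.mem_univ _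
          rcases hc2' with h | ⟨-, -, hlt⟩
          · exact h2 h
          · exact absurd h23 (not_le.2 hlt)
        have heq := hmaxEq _ hmod' Set.subset_union_left hne'
        have hc1' : c1 ∈ M₀ ∪ (M₀ᶜ ∩ {i | 0 < i ∧ i < b}) := by
          refine Or.inr ⟨h1, ?_, ?_⟩
          · exact lt_of_le_of_ne (Fin.zero_le _) (fun he => h1 (by rw [← he]; exact hx0M))
          · exact lt_of_le_of_ne h12 (fun he => h1 (by rw [he]; exact hbM))
        rw [← heq] at hc1'
        exact h1 hc1'
      have hCconv' : ∀ ⦃c1 b c2 : Fin (k+1)⦄,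
          c1 ∉ M₀ → c2 ∉ M₀ → π c1 ≤ π b → π b ≤ π c2 → b ∉ M₀ := by
        intro c1 b c2 h1 h2 h12 h23 hbM
        have hmod' := gap_module' π hmod₀ hv0 hbM
        have hne' : M₀ ∪ (M₀ᶜ ∩ {i | π (π.symm 0) < π i ∧ π i < π b}) ≠ Set.univ := by
          intro hu
          have hc2' : c2 ∈ M₀ ∪ (M₀ᶜ ∩ {i | π (π.symm 0) < π i ∧ π i < π b}) := by
            rw [hu]; exact Set.mem_univ _
          rcases hc2' with h | ⟨-, -, hlt⟩
          · exact h2 h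
          · exact absurd h23 (not_le.2 hlt)
        have heq := hmaxEq _ hmod' Set.subset_union_left hne'
        have hc1' : c1 ∈ M₀ ∪ (M₀ᶜ ∩ {i | π (π.symm 0) < π i ∧ π i < π b}) := by
          refine Or.inr ⟨h1, ?_, ?_⟩
          · rw [π.apply_symm_apply]
            exact lt_of_le_of_ne (Fin.zero_le _)
              (fun he => h1 (by rw [show c1 = π.symm 0 by rw [he, Equiv.symm_apply_apply]]; exact hv0))
          · exact lt_of_le_of_ne h12 (fun he => h1 (by rw [π.injective he]; exact hbM))
        rw [← heq] at hc1'
        exact h1 hc1'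
      have hint : IsPermInterval π M₀ᶜ := by
        constructor
        · intro a b c ha hc hab hbc
          exact hCconv ha hc hab hbc
        · rintro a b c ⟨i, hi, rfl⟩ ⟨j, hj, rfl⟩ hab hbc
          refine ⟨π.symm b, ?_, π.apply_symm_apply b⟩
          have h1 : π i ≤ π (π.symm b) := by rw [π.apply_symm_apply]; exact hab
          have h2 : π (π.symm b) ≤ π j := by rw [π.apply_symm_apply]; exact hbc
          exact hCconv' hi hj h1 h2
      rcases hsimple _ hint with h | h
      · -- complement is a single point w0
        obtain ⟨w0, hw0⟩ := (Set.ne_univ_iff_exists_notMem M₀).1 hne₀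
        have hone : ∀ x ∈ M₀ᶜ, ∀ y ∈ M₀ᶜ, x = y := (Set.ncard_le_one (Set.toFinite _)).1 h
        have hMall : ∀ i : Fin (k+1), i ≠ w0 → i ∈ M₀ := by
          intro i hi
          by_contra hiM
          exact hi (hone i hiM w0 hw0)
        have hw0ne0 : w0 ≠ 0 := fun he => hw0 (by rw [he]; exact hx0M)
        have hw0nel : w0 ≠ Fin.last k := fun he => hw0 (by rw [he]; exact hlast)
        have hS2 : ∀ i : Fin (k+1), i < w0 → i ∈ M₀ := fun i hi => hMall i hi.ne
        have htail : ¬ IsPermInterval π {i : Fin (k+1) | i ≤ w0} := by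
          intro hintS
          rcases hsimple _ hintS with hS | hS
          · have h2' : 1 < Set.ncard {i : Fin (k+1) | i ≤ w0} :=
              (Set.one_lt_ncard_iff (Set.toFinite _)).2
                ⟨0, w0, by simp, by simp, Ne.symm hw0ne0⟩
            omega
          · have hmem : Fin.last k ∈ {i : Fin (k+1) | i ≤ w0} := by
              rw [hS]; exact Set.mem_univ _
            exact absurd hmem (not_le.2 (lt_of_le_of_ne (Fin.le_last _) hw0nel))
        apply htail
        constructor
        · intro a b c _ hc _ hbc
          exact le_trans hbc hc
        · rcases type_dichotomy π hmod₀ hw0 with hP | hQ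
          · have himg : π '' {i : Fin (k+1) | i ≤ w0} = {x | x ≤ π w0} := by
              ext x
              constructor
              · rintro ⟨i, hi, rfl⟩
                rcases eq_or_lt_of_le (show i ≤ w0 from hi) with he | hlt
                · simp [he]
                · exact le_of_not_gt (fun hx => lt_asymm hlt ((hP i (hS2 i hlt)).2 hx))
              · intro hx
                refine ⟨π.symm x, ?_, π.apply_symm_apply x⟩
                by_cases he : π.symm x = w0
                · simp [he]
                · show π.symm x ≤ w0
                  refine le_of_not_gt (fun hlt => ?_)
                  have := (hP _ (hMall _ he)).1 hlt
                  rw [π.apply_symm_apply] at this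
                  exact absurd hx (not_le.2 this)
            intro a b c _ hc hab hbc
            rw [himg] at hc ⊢
            exact le_trans hbc hc
          · have himg : π '' {i : Fin (k+1) | i ≤ w0} = {x | π w0 ≤ x} := by
              ext x
              constructor
              · rintro ⟨i, hi, rfl⟩
                rcases eq_or_lt_of_le (show i ≤ w0 from hi) with he | hlt
                · simp [he]
                · exact le_of_not_gt (fun hx => lt_asymm hlt ((hQ i (hS2 i hlt)).2 hx))
              · intro hx
                refine ⟨π.symm x, ?_, π.apply_symm_apply x⟩
                by_cases he : π.symm x = w0
                · simp [he]
                · show π.symm x ≤ w0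
                  refine le_of_not_gt (fun hlt => ?_)
                  have := (hQ _ (hMall _ he)).1 hlt
                  rw [π.apply_symm_apply] at this
                  exact absurd hx (not_le.2 this)
            intro a b c ha _ hab _
            rw [himg] at ha ⊢
            exact le_trans ha hab
      · have : (0 : Fin (k+1)) ∈ M₀ᶜ := by rw [h]; exact Set.mem_univ _
        exact this hx0M
    · -- H ≠ univ : H is a nontrivial interval
      have hint : IsPermInterval π H := by
        constructor
        · rintro a b c ⟨⟨wa, hwa, hwa'⟩, -⟩ ⟨-, ⟨wc, hwc, hwc'⟩⟩ hab hbc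
          exact ⟨⟨wa, hwa, le_trans hwa' hab⟩, ⟨wc, hwc, le_trans hbc hwc'⟩⟩
        · have hsub1 : ∀ i ∈ H, (∃ p ∈ M₀, π p ≤ π i) ∧ (∃ q ∈ M₀, π i ≤ π q) := by
            intro i hiH
            by_cases hiM : i ∈ M₀
            · exact ⟨⟨i, hiM, le_refl _⟩, ⟨i, hiM, le_refl _⟩⟩
            · obtain ⟨⟨a, haM, hai⟩, ⟨b, hbM, hib⟩⟩ := hiH
              have hai' : a < i :=
                lt_of_le_of_ne hai (fun he => hiM (by rw [← he]; exact haM))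
              have hib' : i < b :=
                lt_of_le_of_ne hib (fun he => hiM (by rw [he]; exact hbM))
              rcases type_dichotomy π hmod₀ hiM with hP | hQ
              · exact ⟨⟨a, haM, (flipP π (hP a haM) hai').le⟩,
                  ⟨b, hbM, ((hP b hbM).1 hib').le⟩⟩
              · exact ⟨⟨b, hbM, ((hQ b hbM).1 hib').le⟩,
                  ⟨a, haM, (flipQ π (hQ a haM) hai').le⟩⟩
          have hsub2 : ∀ x : Fin (k+1),
              (∃ p ∈ M₀, π p ≤ x) → (∃ q ∈ M₀, x ≤ π q) → x ∈ π '' H := by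
            rintro x ⟨p, hp, hpx⟩ ⟨q, hq, hxq⟩
            by_cases hxM : π.symm x ∈ M₀
            · exact ⟨π.symm x, hMH hxM, π.apply_symm_apply x⟩
            · have hpi : π p < π (π.symm x) := by
                rw [π.apply_symm_apply]
                exact lt_of_le_of_ne hpx
                  (fun he => hxM (by rw [← he, π.symm_apply_apply]; exact hp))
              have hiq : π (π.symm x) < π q := by
                rw [π.apply_symm_apply]
                exact lt_of_le_of_ne hxq
                  (fun he => hxM (by rw [he, π.symm_apply_apply]; exact hq))
              refine ⟨π.symm x, ?_, π.apply_symm_apply x⟩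
              rcases type_dichotomy π hmod₀ hxM with hP | hQ
              · exact ⟨⟨p, hp, (flipP' π (hP p hp) hpi).le⟩,
                  ⟨q, hq, ((hP q hq).2 hiq).le⟩⟩
              · exact ⟨⟨q, hq, (flipQ' π (hQ q hq) hiq).le⟩,
                  ⟨p, hp, ((hQ p hp).2 hpi).le⟩⟩
          rintro a b c ⟨i, hiH, rfl⟩ ⟨j, hjH, rfl⟩ hab hbc
          obtain ⟨⟨p, hp, hp'⟩, -⟩ := hsub1 i hiH
          obtain ⟨-, ⟨q, hq, hq'⟩⟩ := hsub1 j hjH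
          exact hsub2 b ⟨p, hp, le_trans hp' hab⟩ ⟨q, hq, le_trans hbc hq'⟩
      rcases hsimple H hint with h | h
      · have h2' : 2 ≤ H.ncard := le_trans hcard₀ (Set.ncard_le_ncard hMH (Set.toFinite _))
        omega
      · exact hH h
  · intro hprime I hI
    exact hprime I (interval_module π hI)
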